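/- arXiv:1504.02444 — 2 statements merged into one kernel-verified Lean document; each statement's English description precedes it below -/
import Mathlib

section
/- A pair (s1, s2) of distinct states of a complete observable FSM S is adaptively homing if and only if the initial state (s1,s2) does not belong to the greatest input-closed subset of states of the intersection FSM S/s1 ∩ S/s2. -/
/-- A (non-initialized) finite state machine with transition relation `h ⊆ S × I × O × S`. -/
structure FSM (S I O : Type) where
  h : S → I → O → S → Prop

namespace FSM

variable {S I O Q : Type}

/-- `M` is complete: every input is defined at every state. -/
def Complete (M : FSM S I O) : Prop := ∀ s i, ∃ o s', M.h s i o s'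

/-- `M` is observable: the `io`-successor of a state is unique when it exists. -/
def Observable (M : FSM S I O) : Prop :=
  ∀ s i o t₁ t₂, M.h s i o t₁ → M.h s i o t₂ → t₁ = t₂

/-- `M.Runs s γ t` : `t` is reached from `s` along the trace `γ` (a list of input/output pairs). -/
inductive Runs (M : FSM S I O) : S → List (I × O) → S → Prop
  | nil (s : S) : Runs M s [] s
  | cons {s : S} {i : I} {o : O} {s' : S} {γ : List (I × O)} {t : S} :
      M.h s i o s' → Runs M s' γ t → Runs M s ((i, o) :: γ) t

/-- A deadlock state has no outgoing transitions. -/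
def Deadlock (M : FSM S I O) (q : S) : Prop := ∀ i o q', ¬ M.h q i o q'

/-- A test case: initially connected, single-input, output-complete, observable,
acyclic initialized FSM. -/
structure IsTestCase (P : FSM Q I O) (q0 : Q) : Prop where
  singleInput : ∀ q i₁ o₁ q₁ i₂ o₂ q₂, P.h q i₁ o₁ q₁ → P.h q i₂ o₂ q₂ → i₁ = i₂
  outputComplete : ∀ q i o q', P.h q i o q' → ∀ o', ∃ q'', P.h q i o' q''
  observable : P.Observable
  acyclic : ∀ q γ, γ ≠ ([] : List (I × O)) → ¬ P.Runs q γ q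
  connected : ∀ q, ∃ γ, P.Runs q0 γ q

/-- `P` (with initial state `q0`) is a homing test case for the set `S'` of states of `M`:
for every trace from `q0` to a deadlock state, the successors of all states of `S'`,
where they exist, coincide in a single state. -/
def IsHomingFor (M : FSM S I O) (S' : Set S) (P : FSM Q I O) (q0 : Q) : Prop :=
  ∀ γ q, P.Runs q0 γ q → P.Deadlock q →
    ∃ s : S, ∀ s' ∈ S', ∀ t, M.Runs s' γ t → t = s

/-- The set `S'` of states of `M` is adaptively homing: some (finite) homing test case exists. -/
def AdaptivelyHomingSet (M : FSM S I O) (S' : Set S) : Prop :=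
  ∃ (Q : Type) (_ : Fintype Q) (P : FSM Q I O) (q0 : Q),
    P.IsTestCase q0 ∧ IsHomingFor M S' P q0

/-- The pair `(s₁, s₂)` is adaptively homing. -/
def AdaptivelyHomingPair (M : FSM S I O) (s₁ s₂ : S) : Prop :=
  AdaptivelyHomingSet M {s₁, s₂}

/-- The intersection FSM `S/s₁ ∩ S/s₂`: states are pairs of states of `M`, and there is a
transition iff both components have the corresponding transition and the successors differ. -/
def inter (M : FSM S I O) : FSM (S × S) I O :=
  ⟨fun p i o p' => M.h p.1 i o p'.1 ∧ M.h p.2 i o p'.2 ∧ p'.1 ≠ p'.2⟩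

/-- A set `A` of states is input-closed in `M`: from every state of `A` every input has at
least one transition leading back into `A`. -/
def InputClosed (M : FSM S I O) (A : Set S) : Prop :=
  ∀ q ∈ A, ∀ i, ∃ o q', M.h q i o q' ∧ q' ∈ A

/-- The intersection `S/s₁ ∩ S/s₂` contains a complete submachine: a set of (distinct-component)
pairs containing the initial state `(s₁, s₂)` and input-closed in the intersection FSM. -/
def HasCompleteSubmachine (M : FSM S I O) (s₁ s₂ : S) : Prop :=
  ∃ A : Set (S × S), (s₁, s₂) ∈ A ∧ (∀ p ∈ A, p.1 ≠ p.2) ∧ InputClosed M.inter A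

/-- One round of the iterative deletion process: keep the states of `A` at which every input
has a transition into `A`. -/
def step (M : FSM S I O) (A : Set S) : Set S :=
  {q ∈ A | ∀ i, ∃ o q', M.h q i o q' ∧ q' ∈ A}

/-- Survivors of the deletion process after `n` rounds, starting from all states. -/
def surv (M : FSM S I O) : ℕ → Set S
  | 0 => Set.univ
  | n + 1 => step M (surv M n)

/-- Survivors of the deletion process on the intersection FSM after `n` rounds, starting
from all states of the intersection (pairs of distinct states). -/
def interSurv (M : FSM S I O) : ℕ → Set (S × S)
  | 0 => {p | p.1 ≠ p.2}
  | n + 1 => step M.inter (interSurv M n)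

/-- The greatest input-closed subset of states of the intersection FSM: the union of all
input-closed sets of distinct-component pairs. -/
def greatestInterClosed (M : FSM S I O) : Set (S × S) :=
  ⋃₀ {A : Set (S × S) | (∀ p ∈ A, p.1 ≠ p.2) ∧ InputClosed M.inter A}

end FSM


namespace FSM

variable {S I O Q : Type}

lemma Runs.append' {M : FSM S I O} {s t u : S} {γ₁ γ₂ : List (I × O)}
    (h1 : M.Runs s γ₁ t) (h2 : M.Runs t γ₂ u) : M.Runs s (γ₁ ++ γ₂) u := by
  induction h1 with
  | nil => exact h2
  | cons h _ ih => exact .cons h (ih h2)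

lemma Runs.nil_eq {M : FSM S I O} {s t : S} (h : M.Runs s [] t) : t = s := by
  cases h; rfl

lemma Runs.cons_inv {M : FSM S I O} {s t : S} {i : I} {o : O} {γ : List (I × O)}
    (h : M.Runs s ((i, o) :: γ) t) : ∃ u, M.h s i o u ∧ M.Runs u γ t := by
  cases h with
  | cons h r => exact ⟨_, h, r⟩

lemma step_subset (M : FSM S I O) (A : Set S) : M.step A ⊆ A := fun _ hq => hq.1

lemma step_mono (M : FSM S I O) {A B : Set S} (hAB : A ⊆ B) : M.step A ⊆ M.step B := by
  rintro q ⟨hq, h2⟩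
  exact ⟨hAB hq, fun i => by obtain ⟨o, q', ht, hm⟩ := h2 i; exact ⟨o, q', ht, hAB hm⟩⟩

lemma interSurv_succ_subset (M : FSM S I O) : ∀ n, M.interSurv (n+1) ⊆ M.interSurv n
  | 0 => step_subset _ _
  | n+1 => step_mono _ (interSurv_succ_subset M n)

lemma interSurv_antitone (M : FSM S I O) {m n : ℕ} (h : m ≤ n) :
    M.interSurv n ⊆ M.interSurv m := by
  induction h with
  | refl => exact subset_rfl
  | @step k _ ih => exact (interSurv_succ_subset M k).trans ih

lemma closed_subset_interSurv {M : FSM S I O} {A : Set (S × S)} (hd : ∀ p ∈ A, p.1 ≠ p.2)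
    (hA : InputClosed M.inter A) : ∀ n, A ⊆ M.interSurv n
  | 0 => fun p hp => hd p hp
  | n+1 => fun p hp =>
      ⟨closed_subset_interSurv hd hA n hp, fun i => by
        obtain ⟨o, q', ht, hm⟩ := hA p hp i
        exact ⟨o, q', ht, closed_subset_interSurv hd hA n hm⟩⟩

lemma iInter_interSurv_closed [Fintype S] [Fintype O] (M : FSM S I O) :
    InputClosed M.inter (⋂ n, M.interSurv n) := by
  intro q hq i
  have hq' : ∀ n, q ∈ M.interSurv n := Set.mem_iInter.mp hq
  have hw : ∀ n : ℕ, ∃ x : O × (S × S), M.inter.h q i x.1 x.2 ∧ x.2 ∈ M.interSurv n := by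
    intro n
    obtain ⟨_, h2⟩ := hq' (n+1)
    obtain ⟨o, q', ht, hm⟩ := h2 i
    exact ⟨(o, q'), ht, hm⟩
  choose f hf1 hf2 using hw
  obtain ⟨y, hy⟩ := Finite.exists_infinite_fiber f
  rw [Set.infinite_coe_iff] at hy
  refine ⟨y.1, y.2, ?_, ?_⟩
  · obtain ⟨n, hn, _⟩ := hy.exists_gt 0
    rw [Set.mem_preimage, Set.mem_singleton_iff] at hn
    have := hf1 n
    rwa [hn] at this
  · rw [Set.mem_iInter]
    intro n
    obtain ⟨m, hm, hnm⟩ := hy.exists_gt n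
    rw [Set.mem_preimage, Set.mem_singleton_iff] at hm
    have := hf2 m
    rw [hm] at this
    exact M.interSurv_antitone hnm.le this

lemma mem_greatest_iff [Fintype S] [Fintype O] (M : FSM S I O) (p : S × S) :
    p ∈ M.greatestInterClosed ↔ ∀ n, p ∈ M.interSurv n := by
  constructor
  · rintro ⟨A, ⟨hd, hA⟩, hp⟩ n
    exact closed_subset_interSurv hd hA n hp
  · intro h
    refine ⟨⋂ n, M.interSurv n, ⟨?_, iInter_interSurv_closed M⟩, Set.mem_iInter.mpr h⟩
    intro q hq
    exact Set.mem_iInter.mp hq 0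

/-- A "bad" pair: distinct components, not in the greatest input-closed set. -/
def Bad (M : FSM S I O) (p : S × S) : Prop := p.1 ≠ p.2 ∧ p ∉ M.greatestInterClosed

/-- Rank: the first round of the deletion process at which the pair is deleted. -/
noncomputable def rank (M : FSM S I O) (p : S × S) : ℕ := sInf {n | p ∉ M.interSurv n}

lemma rank_spec [Fintype S] [Fintype O] {M : FSM S I O} {p : S × S} (hb : M.Bad p) :
    p ∉ M.interSurv (M.rank p) ∧ 0 < M.rank p ∧ p ∈ M.interSurv (M.rank p - 1) := by
  have hne : ∃ n, p ∉ M.interSurv n := by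
    by_contra h
    push_neg at h
    exact hb.2 ((mem_greatest_iff M p).mpr h)
  have h1 : p ∉ M.interSurv (M.rank p) := Nat.sInf_mem hne
  have h0 : (0 : ℕ) ∉ {n | p ∉ M.interSurv n} := by
    simp only [Set.mem_setOf_eq, not_not]
    exact hb.1
  have hpos : 0 < M.rank p := by
    rcases Nat.eq_zero_or_pos (M.rank p) with h | h
    · exact absurd (h ▸ Nat.sInf_mem hne) h0
    · exact h
  refine ⟨h1, hpos, ?_⟩
  have h2 : M.rank p - 1 ∉ {n | p ∉ M.interSurv n} :=
    Nat.notMem_of_lt_sInf (Nat.sub_lt hpos one_pos)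
  simpa using h2

lemma exists_good_input [Fintype S] [Fintype O] {M : FSM S I O} {p : S × S} (hb : M.Bad p) :
    ∃ i : I, ∀ o q', M.inter.h p i o q' → M.Bad q' ∧ M.rank q' < M.rank p := by
  obtain ⟨h1, hpos, h2⟩ := rank_spec hb
  have hstep : p ∉ step M.inter (M.interSurv (M.rank p - 1)) := by
    have he : M.rank p = (M.rank p - 1) + 1 := (Nat.succ_pred_eq_of_pos hpos).symm
    rw [he] at h1
    exact h1
  simp only [step, Set.mem_setOf_eq, not_and] at hstep
  have hstep' := hstep h2
  push_neg at hstep'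
  obtain ⟨i, hi⟩ := hstep'
  refine ⟨i, fun o q' ht => ?_⟩
  have hq' : q' ∉ M.interSurv (M.rank p - 1) := hi o q' ht
  have hrk : M.rank q' ≤ M.rank p - 1 := Nat.sInf_le hq'
  have hlt : M.rank q' < M.rank p := lt_of_le_of_lt hrk (Nat.sub_lt hpos one_pos)
  refine ⟨⟨ht.2.2, fun hg => ?_⟩, hlt⟩
  exact hq' ((mem_greatest_iff M q').mp hg (M.rank p - 1))

section Construction

variable [Fintype S] [Fintype I] [Fintype O] [Nonempty I]
variable (M : FSM S I O)

attribute [local instance] Classical.propDecidable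

set_option linter.unusedSectionVars false

noncomputable def ipick (p : S × S) : I :=
  if hb : M.Bad p then (exists_good_input hb).choose else Classical.arbitrary I

lemma ipick_spec {p : S × S} (hb : M.Bad p) :
    ∀ o q', M.inter.h p (M.ipick p) o q' → M.Bad q' ∧ M.rank q' < M.rank p := by
  rw [ipick, dif_pos hb]
  exact (exists_good_input hb).choose_spec

noncomputable def target (p : S × S) (o : O) : Option (S × S) :=
  if h : ∃ q', M.inter.h p (M.ipick p) o q' then some h.choose else none

lemma target_some {p q' : S × S} {o : O} (h : M.target p o = some q') :
    M.inter.h p (M.ipick p) o q' := by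
  by_cases hc : ∃ q'', M.inter.h p (M.ipick p) o q''
  · rw [target, dif_pos hc] at h
    injection h with h
    exact h ▸ hc.choose_spec
  · rw [target, dif_neg hc] at h
    exact absurd h (by simp)

lemma target_none {p : S × S} {o : O} (h : M.target p o = none) :
    ∀ q', ¬ M.inter.h p (M.ipick p) o q' := by
  intro q' ht
  rw [target, dif_pos ⟨q', ht⟩] at h
  exact Option.some_ne_none _ h

/-- The full test-case FSM on `Option (S × S)` (before restricting to reachable states). -/
noncomputable def P0 : FSM (Option (S × S)) I O :=
  ⟨fun q i o q' => ∃ p, M.Bad p ∧ q = some p ∧ i = M.ipick p ∧ q' = M.target p o⟩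

/-- Reachability from `some (s₁, s₂)` in `P0`. -/
inductive Reach (s₁ s₂ : S) : Option (S × S) → Prop
  | base : Reach s₁ s₂ (some (s₁, s₂))
  | step {q : Option (S × S)} {i : I} {o : O} {q' : Option (S × S)} :
      Reach s₁ s₂ q → (M.P0).h q i o q' → Reach s₁ s₂ q'

/-- The test case: the reachable part of `P0`. -/
noncomputable def Pc (s₁ s₂ : S) : FSM {q : Option (S × S) // Reach M s₁ s₂ q} I O :=
  ⟨fun q i o q' => (M.P0).h q.1 i o q'.1⟩

noncomputable def mval (q : Option (S × S)) : ℕ :=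
  match q with
  | none => 0
  | some p => M.rank p

lemma P0_measure {q q' : Option (S × S)} {i : I} {o : O} (h : (M.P0).h q i o q') :
    M.mval q' < M.mval q := by
  obtain ⟨p, hb, rfl, rfl, rfl⟩ := h
  rcases htg : M.target p o with _ | p'
  · exact (rank_spec hb).2.1
  · exact (M.ipick_spec hb o p' (M.target_some htg)).2

lemma P0_runs_measure {q q' : Option (S × S)} {γ : List (I × O)}
    (h : (M.P0).Runs q γ q') (hγ : γ ≠ []) : M.mval q' < M.mval q := by
  induction h with
  | nil => exact absurd rfl hγ
  | @cons s i o s' γ' t h r ih =>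
    rcases eq_or_ne γ' [] with rfl | hne
    · obtain rfl := r.nil_eq
      exact M.P0_measure h
    · exact (ih hne).trans (M.P0_measure h)

lemma Pc_runs {s₁ s₂ : S} {q q' : {q : Option (S × S) // Reach M s₁ s₂ q}} {γ : List (I × O)}
    (h : (M.Pc s₁ s₂).Runs q γ q') : (M.P0).Runs q.1 γ q'.1 := by
  induction h with
  | nil => exact .nil _
  | cons h _ ih => exact .cons h ih

lemma Pc_testcase (s₁ s₂ : S) :
    (M.Pc s₁ s₂).IsTestCase ⟨some (s₁, s₂), Reach.base⟩ := by
  constructor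
  · rintro q i₁ o₁ q₁ i₂ o₂ q₂ ⟨p, _, hq, rfl, _⟩ ⟨p', _, hq', rfl, _⟩
    rw [hq] at hq'
    injection hq' with hq'
    rw [hq']
  · rintro q i o q' ⟨p, hb, hq, rfl, _⟩ o'
    exact ⟨⟨M.target p o', Reach.step q.2 ⟨p, hb, hq, rfl, rfl⟩⟩, ⟨p, hb, hq, rfl, rfl⟩⟩
  · rintro q i o t₁ t₂ ⟨p, _, hq, _, ht1⟩ ⟨p', _, hq', _, ht2⟩
    rw [hq] at hq'
    injection hq' with hq'
    exact Subtype.ext (ht1.trans (by rw [hq', ← ht2]))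
  · intro q γ hγ hrun
    exact absurd (M.P0_runs_measure (M.Pc_runs hrun) hγ) (lt_irrefl _)
  · intro q
    suffices h : ∀ q₀, ∀ hr : Reach M s₁ s₂ q₀,
        ∃ γ, (M.Pc s₁ s₂).Runs ⟨some (s₁, s₂), Reach.base⟩ γ ⟨q₀, hr⟩ by
      exact h q.1 q.2
    intro q₀ hr
    induction hr with
    | base => exact ⟨[], .nil _⟩
    | @step q i o q' hrq htrans ih =>
      obtain ⟨γ, hγ⟩ := ih
      exact ⟨γ ++ [(i, o)], hγ.append' (Runs.cons
        (show (M.Pc s₁ s₂).h ⟨q, hrq⟩ i o ⟨q', Reach.step hrq htrans⟩ from htrans) (.nil _))⟩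

lemma inv (ho : M.Observable) :
    ∀ (γ : List (I × O)) (p : S × S) (q : Option (S × S)), M.Bad p → (M.P0).Runs (some p) γ q →
      (∀ p', q = some p' → M.Bad p' ∧ (∀ t, M.Runs p.1 γ t → t = p'.1) ∧
        (∀ t, M.Runs p.2 γ t → t = p'.2)) ∧
      (q = none → ∃ s, (∀ t, M.Runs p.1 γ t → t = s) ∧ (∀ t, M.Runs p.2 γ t → t = s)) := by
  intro γ
  induction γ with
  | nil =>
    intro p q hb hrun
    obtain rfl := hrun.nil_eq
    refine ⟨?_, by simp⟩
    rintro p' hp'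
    injection hp' with hp'
    subst hp'
    exact ⟨hb, fun t ht => ht.nil_eq, fun t ht => ht.nil_eq⟩
  | cons io γ' ih =>
    obtain ⟨i, o⟩ := io
    intro p q hb hrun
    obtain ⟨u, htr, hrun'⟩ := hrun.cons_inv
    obtain ⟨p₀, hb₀, hsome, hi, hu⟩ := htr
    injection hsome with hsome
    subst hsome
    subst hi
    subst hu
    rcases htg : M.target p o with _ | p''
    · rw [htg] at hrun'
      have hqγ : q = none ∧ γ' = [] := by
        cases hrun' with
        | nil => exact ⟨rfl, rfl⟩
        | cons h _ =>
          obtain ⟨p', _, hcc, _⟩ := h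
          cases hcc
      obtain ⟨rfl, rfl⟩ := hqγ
      have hnone := M.target_none htg
      refine ⟨by rintro p' ⟨⟩, fun _ => ?_⟩
      by_cases h1 : ∃ t₁, M.h p.1 (M.ipick p) o t₁
      · obtain ⟨t₁, ht₁⟩ := h1
        refine ⟨t₁, ?_, ?_⟩
        · intro t ht
          obtain ⟨w, hw, hrw⟩ := ht.cons_inv
          rw [hrw.nil_eq]
          exact ho _ _ _ _ _ hw ht₁
        · intro t ht
          obtain ⟨w, hw, hrw⟩ := ht.cons_inv
          rw [hrw.nil_eq]
          by_contra hne'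
          exact hnone (t₁, w) ⟨ht₁, hw, fun he => hne' he.symm⟩
      · by_cases h2 : ∃ t₂, M.h p.2 (M.ipick p) o t₂
        · obtain ⟨t₂, ht₂⟩ := h2
          refine ⟨t₂, ?_, ?_⟩
          · intro t ht
            obtain ⟨w, hw, _⟩ := ht.cons_inv
            exact absurd ⟨w, hw⟩ h1
          · intro t ht
            obtain ⟨w, hw, hrw⟩ := ht.cons_inv
            rw [hrw.nil_eq]
            exact ho _ _ _ _ _ hw ht₂
        · refine ⟨p.1, ?_, ?_⟩
          · intro t ht
            obtain ⟨w, hw, _⟩ := ht.cons_inv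
            exact absurd ⟨w, hw⟩ h1
          · intro t ht
            obtain ⟨w, hw, _⟩ := ht.cons_inv
            exact absurd ⟨w, hw⟩ h2
    · rw [htg] at hrun'
      have hint := M.target_some htg
      obtain ⟨hb'', _⟩ := M.ipick_spec hb o p'' hint
      have IH := ih p'' q hb'' hrun'
      have h1 : M.h p.1 (M.ipick p) o p''.1 := hint.1
      have h2 : M.h p.2 (M.ipick p) o p''.2 := hint.2.1
      constructor
      · intro p' hq
        obtain ⟨hbp', hs1, hs2⟩ := IH.1 p' hq
        refine ⟨hbp', ?_, ?_⟩
        · intro t ht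
          obtain ⟨w, hw, hrw⟩ := ht.cons_inv
          exact hs1 t ((ho _ _ _ _ _ hw h1) ▸ hrw)
        · intro t ht
          obtain ⟨w, hw, hrw⟩ := ht.cons_inv
          exact hs2 t ((ho _ _ _ _ _ hw h2) ▸ hrw)
      · intro hq
        obtain ⟨s, hs1, hs2⟩ := IH.2 hq
        refine ⟨s, ?_, ?_⟩
        · intro t ht
          obtain ⟨w, hw, hrw⟩ := ht.cons_inv
          exact hs1 t ((ho _ _ _ _ _ hw h1) ▸ hrw)
        · intro t ht
          obtain ⟨w, hw, hrw⟩ := ht.cons_inv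
          exact hs2 t ((ho _ _ _ _ _ hw h2) ▸ hrw)

lemma Pc_homing (hc : M.Complete) (ho : M.Observable) {s₁ s₂ : S} (hb0 : M.Bad (s₁, s₂)) :
    IsHomingFor M {s₁, s₂} (M.Pc s₁ s₂) ⟨some (s₁, s₂), Reach.base⟩ := by
  intro γ q hrun hdead
  have hp0 := M.Pc_runs hrun
  have hinv := M.inv ho γ (s₁, s₂) q.1 hb0 hp0
  rcases hq : q.1 with _ | p
  · obtain ⟨s, hs1, hs2⟩ := hinv.2 hq
    refine ⟨s, ?_⟩
    rintro s' hs' t ht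
    rcases hs' with rfl | hs'
    · exact hs1 t ht
    · rw [Set.mem_singleton_iff] at hs'
      subst hs'
      exact hs2 t ht
  · exfalso
    obtain ⟨hbp, -, -⟩ := hinv.1 p hq
    obtain ⟨o, s', -⟩ := hc p.1 (M.ipick p)
    exact hdead (M.ipick p) o
      ⟨M.target p o, Reach.step (hq ▸ q.2) ⟨p, hbp, hq, rfl, rfl⟩⟩
      ⟨p, hbp, hq, rfl, rfl⟩

end Construction

lemma not_homing_of_closed [Fintype S] [Fintype I] [Fintype O] (M : FSM S I O) {s₁ s₂ : S}
    (hmem : (s₁, s₂) ∈ M.greatestInterClosed) : ¬ M.AdaptivelyHomingPair s₁ s₂ := by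
  rintro ⟨Q, fQ, P, q0, tc, hom⟩
  obtain ⟨A, ⟨hd, hA⟩, hpA⟩ := hmem
  haveI := fQ
  haveI : Finite Q := Finite.of_fintype Q
  set R : Q → Q → Prop := fun x y => ∃ i o, P.h y i o x with hR
  have htg : ∀ a b, Relation.TransGen R a b → ∃ γ, γ ≠ ([] : List (I × O)) ∧ P.Runs b γ a := by
    intro a b h
    induction h with
    | single hab =>
      obtain ⟨i, o, h⟩ := hab
      exact ⟨[(i, o)], by simp, .cons h (.nil _)⟩
    | tail _ hbc ih =>
      obtain ⟨γ, hne, hrun⟩ := ih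
      obtain ⟨i, o, h⟩ := hbc
      exact ⟨(i, o) :: γ, by simp, .cons h hrun⟩
  haveI : IsTrans Q (Relation.TransGen R) := ⟨fun _ _ _ => Relation.TransGen.trans⟩
  haveI : IsIrrefl Q (Relation.TransGen R) := ⟨fun a h => by
    obtain ⟨γ, hne, hrun⟩ := htg a a h
    exact tc.acyclic a γ hne hrun⟩
  have hwf : WellFounded R := Subrelation.wf (fun h => Relation.TransGen.single h)
    (Finite.wellFounded_of_trans_of_irrefl _)
  have key : ∀ q : Q, ∀ γ (p : S × S), p ∈ A → P.Runs q0 γ q →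
      M.Runs s₁ γ p.1 → M.Runs s₂ γ p.2 → False := by
    intro q
    induction q using WellFounded.induction hwf with
    | _ q ih =>
    intro γ p hp hrq hr1 hr2
    by_cases hd' : P.Deadlock q
    · obtain ⟨s, hs⟩ := hom γ q hrq hd'
      have e1 : p.1 = s := hs s₁ (by simp) p.1 hr1
      have e2 : p.2 = s := hs s₂ (by simp) p.2 hr2
      exact hd p hp (e1.trans e2.symm)
    · have hex : ∃ i o q₁, P.h q i o q₁ := by
        simp only [Deadlock, not_forall, not_not] at hd'
        exact hd'
      obtain ⟨i, o₀, q₁, h₀⟩ := hex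
      obtain ⟨o, p', htr, hp'⟩ := hA p hp i
      obtain ⟨q₂, h₂⟩ := tc.outputComplete q i o₀ q₁ h₀ o
      exact ih q₂ ⟨i, o, h₂⟩ (γ ++ [(i, o)]) p' hp'
        (hrq.append' (.cons h₂ (.nil _)))
        (hr1.append' (.cons htr.1 (.nil _)))
        (hr2.append' (.cons htr.2.1 (.nil _)))
  exact key q0 [] (s₁, s₂) hpA (.nil _) (.nil _) (.nil _)

end FSM

/-- the pair `(s₁, s₂)` is adaptively homing iff `(s₁, s₂)` does not belong to
the greatest input-closed subset of states of the intersection `S/s₁ ∩ S/s₂`. -/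
theorem adaptively_homing_iff_not_in_greatest_closed
    {S I O : Type} [Fintype S] [Fintype I] [Fintype O]
    (M : FSM S I O) (hc : M.Complete) (ho : M.Observable) (s₁ s₂ : S) (hne : s₁ ≠ s₂) :
    M.AdaptivelyHomingPair s₁ s₂ ↔ (s₁, s₂) ∉ M.greatestInterClosed := by
  constructor
  · intro h hmem
    exact FSM.not_homing_of_closed M hmem h
  · intro hg
    haveI : Nonempty I := by
      by_contra hni
      exact hg ⟨{p | p.1 ≠ p.2}, ⟨fun p hp => hp, fun q hq i => absurd ⟨i⟩ hni⟩, hne⟩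
    have hb0 : M.Bad (s₁, s₂) := ⟨hne, hg⟩
    exact ⟨_, Fintype.ofFinite _, M.Pc s₁ s₂, ⟨some (s₁, s₂), FSM.Reach.base⟩,
      M.Pc_testcase s₁ s₂, M.Pc_homing hc ho hb0⟩
end

section
/- If a pair (s1,s2) of states of a complete observable FSM S with n states is adaptively homing, then it admits a homing test case of length (height, the length of the longest trace from the initial state to a deadlock state) at most n(n−1)/2. -/
namespace FSM

open scoped Classical

variable {S I O : Type}

/-! ### Auxiliary development for the height bound -/

/-- Step operator for the family of homeable pairs. -/
def Wstep (M : FSM S I O) (A : Set (S × S)) : Set (S × S) :=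
  A ∪ {p | p.1 ≠ p.2 ∧ ∃ i : I, ∀ o a b,
    M.h p.1 i o a → M.h p.2 i o b → a ≠ b → (a, b) ∈ A}

/-- Pairs homeable within `k` steps. -/
def Wset (M : FSM S I O) : ℕ → Set (S × S)
  | 0 => ∅
  | k + 1 => Wstep M (Wset M k)

lemma Wset_succ (M : FSM S I O) (k : ℕ) : Wset M (k + 1) = Wstep M (Wset M k) := rfl

lemma Wset_mono_succ (M : FSM S I O) (k : ℕ) : Wset M k ⊆ Wset M (k + 1) :=
  Set.subset_union_left

lemma Wset_mono (M : FSM S I O) {k m : ℕ} (h : k ≤ m) : Wset M k ⊆ Wset M m := by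
  induction m with
  | zero => simpa [Nat.le_zero.mp h] using subset_rfl
  | succ m ih =>
    rcases Nat.lt_or_ge k (m+1) with hlt | hge
    · exact (ih (by omega)).trans (Wset_mono_succ M m)
    · have : k = m + 1 := by omega
      subst this; exact subset_rfl

lemma Wset_ne (M : FSM S I O) : ∀ {k : ℕ} {p : S × S}, p ∈ Wset M k → p.1 ≠ p.2 := by
  intro k
  induction k with
  | zero => intro p hp; exact absurd hp (by simp [Wset])
  | succ k ih =>
    intro p hp
    rcases hp with hp | hp
    · exact ih hp
    · exact hp.1

lemma Wset_swap (M : FSM S I O) : ∀ {k : ℕ} {a b : S},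
    (a, b) ∈ Wset M k → (b, a) ∈ Wset M k := by
  intro k
  induction k with
  | zero => intro a b hp; exact absurd hp (by simp [Wset])
  | succ k ih =>
    intro a b hp
    rcases hp with hp | ⟨hne, i, hi⟩
    · exact Or.inl (ih hp)
    · refine Or.inr ⟨Ne.symm hne, i, fun o x y hx hy hxy => ?_⟩
      exact ih (hi o y x hy hx (Ne.symm hxy))

lemma exists_strat_input (M : FSM S I O) {p : S × S} (h : ∃ k, p ∈ Wset M k) :
    ∃ i : I, ∀ k, p ∈ Wset M k → ∀ o a b, M.h p.1 i o a → M.h p.2 i o b → a ≠ b →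
      (a, b) ∈ Wset M (k - 1) := by
  obtain ⟨r, hr⟩ : ∃ r, Nat.find h = r + 1 := by
    cases hfind : Nat.find h with
    | zero => exact absurd (hfind ▸ Nat.find_spec h) (by simp [Wset])
    | succ r => exact ⟨r, rfl⟩
  have hp : p ∈ Wset M (r + 1) := hr ▸ Nat.find_spec h
  have hnp : p ∉ Wset M r := Nat.find_min h (by omega)
  rcases hp with hp | ⟨hne, i, hi⟩
  · exact absurd hp hnp
  refine ⟨i, fun k hk o a b ha hb hab => ?_⟩
  have hrk : r + 1 ≤ k := hr ▸ Nat.find_min' h hk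
  exact Wset_mono M (by omega) (hi o a b ha hb hab)

/-- The strategy input chosen at a homeable pair. -/
noncomputable def strat (M : FSM S I O) (p : S × S) : Option I :=
  if h : ∃ k, p ∈ Wset M k then some (exists_strat_input M h).choose else none

lemma strat_isSome (M : FSM S I O) {p : S × S} {k : ℕ} (h : p ∈ Wset M k) :
    ∃ i, strat M p = some i := by
  rw [strat, dif_pos ⟨k, h⟩]; exact ⟨_, rfl⟩

lemma strat_spec (M : FSM S I O) {p : S × S} {k : ℕ} (hk : p ∈ Wset M k) {i : I}
    (hs : strat M p = some i) {o : O} {a b : S} (ha : M.h p.1 i o a) (hb : M.h p.2 i o b)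
    (hab : a ≠ b) : (a, b) ∈ Wset M (k - 1) := by
  rw [strat, dif_pos ⟨k, hk⟩] at hs
  obtain rfl : (exists_strat_input M ⟨k, hk⟩).choose = i := by injection hs
  exact (exists_strat_input M ⟨k, hk⟩).choose_spec k hk o a b ha hb hab

/-- The (unique, when defined) `i/o`-successor of a state. -/
noncomputable def nextS (M : FSM S I O) (s : S) (i : I) (o : O) : Option S :=
  if h : ∃ t, M.h s i o t then some h.choose else none

lemma nextS_mem (M : FSM S I O) {s : S} {i : I} {o : O} {t : S}
    (h : nextS M s i o = some t) : M.h s i o t := by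
  by_cases he : ∃ u, M.h s i o u
  · rw [nextS, dif_pos he] at h
    obtain rfl : he.choose = t := by injection h
    exact he.choose_spec
  · rw [nextS, dif_neg he] at h; cases h

lemma nextS_eq (M : FSM S I O) (ho : M.Observable) {s : S} {i : I} {o : O} {t : S}
    (h : M.h s i o t) : nextS M s i o = some t := by
  have he : ∃ u, M.h s i o u := ⟨t, h⟩
  rw [nextS, dif_pos he]
  exact congrArg some (ho s i o _ _ he.choose_spec h)

/-- Tracking the current pair along a trace; `none` when the pair has merged (or a
component became undefined). -/
noncomputable def track (M : FSM S I O) : S × S → List (I × O) → Option (S × S)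
  | p, [] => some p
  | p, (i, o) :: γ =>
    match nextS M p.1 i o, nextS M p.2 i o with
    | some a, some b => if a = b then none else track M (a, b) γ
    | _, _ => none

/-- Traces of the strategy tree. -/
def ValidFrom (M : FSM S I O) : S × S → List (I × O) → Prop
  | _, [] => True
  | p, (i, o) :: γ =>
    strat M p = some i ∧
    match nextS M p.1 i o, nextS M p.2 i o with
    | some a, some b => if a = b then γ = [] else ValidFrom M (a, b) γ
    | _, _ => γ = []

lemma valid_nil (M : FSM S I O) (p : S × S) : ValidFrom M p [] := trivial

lemma valid_prefix (M : FSM S I O) : ∀ {γ₁ γ₂ : List (I × O)} {p : S × S},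
    ValidFrom M p (γ₁ ++ γ₂) → ValidFrom M p γ₁ := by
  intro γ₁
  induction γ₁ with
  | nil => intro γ₂ p _; trivial
  | cons x γ₁ ih =>
    intro γ₂ p h
    obtain ⟨i, o⟩ := x
    obtain ⟨hs, hm⟩ := h
    refine ⟨hs, ?_⟩
    rcases hA : nextS M p.1 i o with _ | a <;> rcases hB : nextS M p.2 i o with _ | b <;>
      simp only [hA, hB] at hm ⊢
    · exact List.append_eq_nil_iff.mp hm |>.1
    · exact List.append_eq_nil_iff.mp hm |>.1
    · exact List.append_eq_nil_iff.mp hm |>.1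
    · by_cases hab : a = b
      · simp only [if_pos hab] at hm ⊢
        exact List.append_eq_nil_iff.mp hm |>.1
      · simp only [if_neg hab] at hm ⊢
        exact ih hm

lemma valid_append_iff (M : FSM S I O) : ∀ {γ : List (I × O)} {p : S × S} {i : I} {o : O},
    ValidFrom M p (γ ++ [(i, o)]) ↔
      ValidFrom M p γ ∧ ∃ q, track M p γ = some q ∧ strat M q = some i := by
  intro γ
  induction γ with
  | nil =>
    intro p i o
    constructor
    · rintro ⟨hs, -⟩
      exact ⟨trivial, p, rfl, hs⟩
    · rintro ⟨-, q, hq, hs⟩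
      obtain rfl : p = q := by injection hq
      refine ⟨hs, ?_⟩
      rcases hA : nextS M p.1 i o with _ | a <;> rcases hB : nextS M p.2 i o with _ | b <;>
        simp [hA, hB, ValidFrom]
  | cons x γ ih =>
    intro p i o
    obtain ⟨i₁, o₁⟩ := x
    show (strat M p = some i₁ ∧ _) ↔ _
    constructor
    · rintro ⟨hs, hm⟩
      rcases hA : nextS M p.1 i₁ o₁ with _ | a <;> rcases hB : nextS M p.2 i₁ o₁ with _ | b <;>
        simp only [hA, hB] at hm
      · simp at hm
      · simp at hm
      · simp at hm
      · by_cases hab : a = b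
        · simp only [if_pos hab] at hm; simp at hm
        · simp only [if_neg hab] at hm
          obtain ⟨hv, q, hq, hsq⟩ := ih.mp hm
          refine ⟨⟨hs, ?_⟩, q, ?_, hsq⟩
          · simp only [hA, hB, if_neg hab]; exact hv
          · show track M p ((i₁, o₁) :: γ) = some q
            simp only [track, hA, hB, if_neg hab]; exact hq
    · rintro ⟨⟨hs, hm⟩, q, hq, hsq⟩
      refine ⟨hs, ?_⟩
      rcases hA : nextS M p.1 i₁ o₁ with _ | a <;> rcases hB : nextS M p.2 i₁ o₁ with _ | b <;>
        simp only [track, hA, hB] at hm hq ⊢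
      · cases hq
      · cases hq
      · cases hq
      · by_cases hab : a = b
        · rw [if_pos hab] at hq; cases hq
        · rw [if_neg hab] at hm hq ⊢
          exact ih.mpr ⟨hm, q, hq, hsq⟩

lemma valid_length (M : FSM S I O) : ∀ {γ : List (I × O)} {k : ℕ} {p : S × S},
    p ∈ Wset M k → ValidFrom M p γ → γ.length ≤ k := by
  intro γ
  induction γ with
  | nil => intro k p _ _; simp
  | cons x γ ih =>
    intro k p hk hv
    obtain ⟨i, o⟩ := x
    obtain ⟨hs, hm⟩ := hv
    obtain ⟨k', rfl⟩ : ∃ k', k = k' + 1 := by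
      cases k with
      | zero => exact absurd hk (by simp [Wset])
      | succ k' => exact ⟨k', rfl⟩
    rcases hA : nextS M p.1 i o with _ | a <;> rcases hB : nextS M p.2 i o with _ | b <;>
      simp only [hA, hB] at hm
    · simp [hm]
    · simp [hm]
    · simp [hm]
    · by_cases hab : a = b
      · rw [if_pos hab] at hm; simp [hm]
      · rw [if_neg hab] at hm
        have hmem : (a, b) ∈ Wset M k' :=
          strat_spec M hk hs (nextS_mem M hA) (nextS_mem M hB) hab
        simpa using Nat.add_le_add_right (ih hmem hm) 1

lemma valid_track_W (M : FSM S I O) : ∀ {γ : List (I × O)} {k : ℕ} {p q : S × S},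
    p ∈ Wset M k → ValidFrom M p γ → track M p γ = some q → ∃ m, q ∈ Wset M m := by
  intro γ
  induction γ with
  | nil =>
    intro k p q hk _ ht
    obtain rfl : p = q := by injection ht
    exact ⟨k, hk⟩
  | cons x γ ih =>
    intro k p q hk hv ht
    obtain ⟨i, o⟩ := x
    obtain ⟨hs, hm⟩ := hv
    rcases hA : nextS M p.1 i o with _ | a <;> rcases hB : nextS M p.2 i o with _ | b <;>
      simp only [track, hA, hB] at hm ht
    · cases ht
    · cases ht
    · cases ht
    · by_cases hab : a = b
      · rw [if_pos hab] at ht; cases ht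
      · rw [if_neg hab] at hm ht
        have hmem : (a, b) ∈ Wset M (k - 1) :=
          strat_spec M hk hs (nextS_mem M hA) (nextS_mem M hB) hab
        exact ih hmem hm ht

lemma runs_det (M : FSM S I O) (ho : M.Observable) : ∀ {γ : List (I × O)} {s t₁ t₂ : S},
    M.Runs s γ t₁ → M.Runs s γ t₂ → t₁ = t₂ := by
  intro γ
  induction γ with
  | nil =>
    intro s t₁ t₂ h₁ h₂
    cases h₁; cases h₂; rfl
  | cons x γ ih =>
    intro s t₁ t₂ h₁ h₂
    obtain ⟨i, o⟩ := x
    cases h₁ with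
    | cons hh₁ hr₁ =>
      rename_i a
      cases h₂ with
      | cons hh₂ hr₂ =>
        have := ho s i o _ _ hh₁ hh₂
        subst this
        exact ih hr₁ hr₂

lemma merge_of_track_none (M : FSM S I O) (ho : M.Observable) :
    ∀ {γ : List (I × O)} {p : S × S} {t₁ t₂ : S},
    track M p γ = none → M.Runs p.1 γ t₁ → M.Runs p.2 γ t₂ → t₁ = t₂ := by
  intro γ
  induction γ with
  | nil => intro p t₁ t₂ ht _ _; cases ht
  | cons x γ ih =>
    intro p t₁ t₂ ht h₁ h₂
    obtain ⟨i, o⟩ := x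
    cases h₁ with
    | cons hh₁ hr₁ =>
      rename_i a
      cases h₂ with
      | cons hh₂ hr₂ =>
        rename_i b
        have hA : nextS M p.1 i o = some a := nextS_eq M ho hh₁
        have hB : nextS M p.2 i o = some b := nextS_eq M ho hh₂
        simp only [track, hA, hB] at ht
        by_cases hab : a = b
        · subst hab
          exact runs_det M ho hr₁ hr₂
        · rw [if_neg hab] at ht
          exact ih (p := (a, b)) ht hr₁ hr₂

/-- The strategy tree as an FSM on valid traces. -/
def tree (M : FSM S I O) (p₀ : S × S) :
    FSM {γ : List (I × O) // ValidFrom M p₀ γ} I O :=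
  ⟨fun q i o q' => q'.1 = q.1 ++ [(i, o)]⟩

lemma tree_runs_eq (M : FSM S I O) (p₀ : S × S) :
    ∀ {γ : List (I × O)} {q q' : {γ : List (I × O) // ValidFrom M p₀ γ}},
    (tree M p₀).Runs q γ q' → q'.1 = q.1 ++ γ := by
  intro γ
  induction γ with
  | nil => intro q q' h; cases h; simp
  | cons x γ ih =>
    intro q q' h
    obtain ⟨i, o⟩ := x
    cases h with
    | cons hh hr =>
      rename_i qmid
      have h1 : qmid.1 = q.1 ++ [(i, o)] := hh
      have h2 := ih hr
      rw [h2, h1]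
      simp

lemma tree_runs_to (M : FSM S I O) (p₀ : S × S) :
    ∀ (γ δ : List (I × O)) (h : ValidFrom M p₀ (δ ++ γ)),
    (tree M p₀).Runs ⟨δ, valid_prefix M h⟩ γ ⟨δ ++ γ, h⟩ := by
  intro γ
  induction γ with
  | nil =>
    intro δ h
    have : (⟨δ ++ [], h⟩ : {γ : List (I × O) // ValidFrom M p₀ γ}) = ⟨δ, valid_prefix M h⟩ :=
      Subtype.ext (by simp)
    rw [this]
    exact Runs.nil _
  | cons x γ ih =>
    intro δ h
    obtain ⟨i, o⟩ := x
    have hmid : ValidFrom M p₀ ((δ ++ [(i, o)]) ++ γ) := by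
      simpa using h
    have htrans : (tree M p₀).h ⟨δ, valid_prefix M h⟩ i o ⟨δ ++ [(i, o)], valid_prefix M hmid⟩ :=
      rfl
    have hrest := ih (δ ++ [(i, o)]) hmid
    have : (⟨δ ++ [(i, o)] ++ γ, hmid⟩ : {γ : List (I × O) // ValidFrom M p₀ γ}) =
        ⟨δ ++ (i, o) :: γ, h⟩ := Subtype.ext (by simp)
    rw [this] at hrest
    exact Runs.cons htrans hrest

end FSM

namespace FSM

open scoped Classical

variable {S I O : Type}

/-- Run-length bound in a finite acyclic FSM. -/
lemma runs_len_lt {Q : Type} [Fintype Q] (P : FSM Q I O)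
    (hac : ∀ q γ, γ ≠ ([] : List (I × O)) → ¬ P.Runs q γ q) :
    ∀ (γ : List (I × O)) (A : Finset Q) (s t : Q), P.Runs s γ t →
      (∀ γ₁ m, γ₁ <+: γ → P.Runs s γ₁ m → m ∈ A) → γ.length < A.card := by
  intro γ
  induction γ with
  | nil =>
    intro A s t _ hA
    have hs : s ∈ A := hA [] s List.nil_prefix (Runs.nil s)
    simpa using Finset.card_pos.mpr ⟨s, hs⟩
  | cons x γ ih =>
    intro A s t hr hA
    obtain ⟨i, o⟩ := x
    cases hr with
    | cons hh hr' =>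
      rename_i s'
      have hs : s ∈ A := hA [] s List.nil_prefix (Runs.nil s)
      have hstep : ∀ γ₁ m, γ₁ <+: γ → P.Runs s' γ₁ m → m ∈ A.erase s := by
        intro γ₁ m hpre hrun
        have hmem : m ∈ A :=
          hA ((i, o) :: γ₁) m (List.cons_prefix_cons.mpr ⟨rfl, hpre⟩) (Runs.cons hh hrun)
        have hms : m ≠ s := by
          rintro rfl
          exact hac m ((i, o) :: γ₁) (by simp) (Runs.cons hh hrun)
        exact Finset.mem_erase.mpr ⟨hms, hmem⟩
      have := ih (A.erase s) s' t hr' hstep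
      have hcard : (A.erase s).card + 1 = A.card := Finset.card_erase_add_one hs
      simp only [List.length_cons]
      omega

/-- Any pair homed by (the subtree at) a state of a test case with run-length bound `k`
lies in `Wset M (k+1)`. -/
lemma homs_mem_W {Q : Type} (M : FSM S I O) (P : FSM Q I O)
    (hoc : ∀ q i o q', P.h q i o q' → ∀ o', ∃ q'', P.h q i o' q'') :
    ∀ (k : ℕ) (q : Q) (a b : S),
    (∀ γ r, P.Runs q γ r → γ.length ≤ k) →
    (∀ γ r, P.Runs q γ r → P.Deadlock r → ∀ t₁ t₂, M.Runs a γ t₁ → M.Runs b γ t₂ → t₁ = t₂) →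
    a ≠ b → (a, b) ∈ Wset M (k + 1) := by
  intro k
  induction k with
  | zero =>
    intro q a b hbound hhoms hab
    by_cases hd : P.Deadlock q
    · exact absurd (hhoms [] q (Runs.nil q) hd a b (Runs.nil a) (Runs.nil b)) hab
    · simp only [Deadlock, not_forall, not_not] at hd
      obtain ⟨i, o, q', hq'⟩ := hd
      have := hbound [(i, o)] q' (Runs.cons hq' (Runs.nil q'))
      simp at this
  | succ k ih =>
    intro q a b hbound hhoms hab
    by_cases hd : P.Deadlock q
    · exact absurd (hhoms [] q (Runs.nil q) hd a b (Runs.nil a) (Runs.nil b)) hab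
    · simp only [Deadlock, not_forall, not_not] at hd
      obtain ⟨i, o, q₁, hq₁⟩ := hd
      refine Or.inr ⟨hab, i, fun o' a' b' ha' hb' hab' => ?_⟩
      obtain ⟨q'', hq''⟩ := hoc q i o q₁ hq₁ o'
      refine ih q'' a' b' ?_ ?_ hab'
      · intro γ r hr
        have := hbound ((i, o') :: γ) r (Runs.cons hq'' hr)
        simpa using this
      · intro γ r hr hdead t₁ t₂ h₁ h₂
        exact hhoms ((i, o') :: γ) r (Runs.cons hq'' hr) hdead t₁ t₂
          (Runs.cons ha' h₁) (Runs.cons hb' h₂)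

/-- Stabilization: every `Wset` is contained in `Wset` at `n(n-1)/2`. -/
lemma Wset_subset_final [Fintype S] (M : FSM S I O) (m : ℕ) :
    Wset M m ⊆ Wset M (Fintype.card S * (Fintype.card S - 1) / 2) := by
  classical
  set N := Fintype.card S * (Fintype.card S - 1) / 2 with hNdef
  -- cardinality of the Sym2-image
  set c : ℕ → ℕ := fun k => ((fun p : S × S => Sym2.mk p.1 p.2) '' Wset M k).ncard with hc
  have hbound : ∀ k, c k ≤ N := by
    intro k
    have hsub : (fun p : S × S => Sym2.mk p.1 p.2) '' Wset M k ⊆ {z : Sym2 S | ¬ z.IsDiag} := by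
      rintro z ⟨p, hp, rfl⟩
      simpa [Sym2.isDiag_iff_proj_eq] using Wset_ne M hp
    have h1 : c k ≤ ({z : Sym2 S | ¬ z.IsDiag} : Set (Sym2 S)).ncard :=
      Set.ncard_le_ncard hsub (Set.toFinite _)
    have h2 : ({z : Sym2 S | ¬ z.IsDiag} : Set (Sym2 S)).ncard = (Fintype.card S).choose 2 := by
      rw [← Nat.card_coe_set_eq]
      simp only [Set.coe_setOf]
      rw [Nat.card_eq_fintype_card]
      convert Sym2.card_subtype_not_diag (α := S)
    rw [h2, Nat.choose_two_right] at h1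
    exact h1
  have hstrict : ∀ k, Wset M k ≠ Wset M (k + 1) → c k < c (k + 1) := by
    intro k hne
    have hss : (fun p : S × S => Sym2.mk p.1 p.2) '' Wset M k ⊂ (fun p : S × S => Sym2.mk p.1 p.2) '' Wset M (k + 1) := by
      refine ⟨Set.image_mono (Wset_mono_succ M k), fun hsub => hne ?_⟩
      refine Set.Subset.antisymm (Wset_mono_succ M k) ?_
      rintro ⟨a, b⟩ hp
      have : Sym2.mk a b ∈ (fun p : S × S => Sym2.mk p.1 p.2) '' Wset M k := hsub ⟨(a, b), hp, rfl⟩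
      obtain ⟨⟨x, y⟩, hxy, heq⟩ := this
      rcases Sym2.eq_iff.mp heq with ⟨rfl, rfl⟩ | ⟨rfl, rfl⟩
      · exact hxy
      · exact Wset_swap M hxy
    exact Set.ncard_lt_ncard hss (Set.toFinite _)
  obtain ⟨k, hkN, hkeq⟩ : ∃ k ≤ N, Wset M k = Wset M (k + 1) := by
    by_contra hcon
    push_neg at hcon
    have hgrow : ∀ j, j ≤ N + 1 → j ≤ c j := by
      intro j
      induction j with
      | zero => intro _; exact Nat.zero_le _
      | succ j ihj =>
        intro hj
        have h1 : j ≤ c j := ihj (by omega)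
        have h2 : c j < c (j + 1) := hstrict j (hcon j (by omega))
        omega
    have := hgrow (N + 1) le_rfl
    have := hbound (N + 1)
    omega
  have hfix : ∀ j, Wset M (k + j) = Wset M k := by
    intro j
    induction j with
    | zero => rfl
    | succ j ihj =>
      calc Wset M (k + (j + 1)) = Wstep M (Wset M (k + j)) := rfl
        _ = Wstep M (Wset M k) := by rw [ihj]
        _ = Wset M (k + 1) := rfl
        _ = Wset M k := hkeq.symm
  rcases Nat.le_total m N with hm | hm
  · exact Wset_mono M hm
  · have hkm : k ≤ m := le_trans hkN hm
    have : Wset M m = Wset M k := by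
      have : m = k + (m - k) := by omega
      rw [this]; exact hfix (m - k)
    rw [this]
    exact Wset_mono M hkN

end FSM

namespace FSM

open scoped Classical

variable {S I O : Type}

/-- The main construction: from `(s₁,s₂) ∈ Wset M N` build a homing test case of height `≤ N`. -/
lemma construction [Fintype I] [Fintype O] (M : FSM S I O)
    (hc : M.Complete) (ho : M.Observable) (s₁ s₂ : S) {N : ℕ}
    (hW : (s₁, s₂) ∈ Wset M N) :
    ∃ (Q : Type) (_ : Fintype Q) (P : FSM Q I O) (q0 : Q),
      P.IsTestCase q0 ∧ IsHomingFor M {s₁, s₂} P q0 ∧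
      ∀ (γ : List (I × O)) (q : Q), P.Runs q0 γ q → γ.length ≤ N := by
  classical
  set p₀ : S × S := (s₁, s₂) with hp₀
  have hlen : ∀ q : {γ : List (I × O) // ValidFrom M p₀ γ}, q.1.length ≤ N :=
    fun q => valid_length M hW q.2
  have hinj : Function.Injective
      (fun q : {γ : List (I × O) // ValidFrom M p₀ γ} => (fun j : Fin N => q.1[(j : ℕ)]?)) := by
    intro q q' h
    apply Subtype.ext
    apply List.ext_getElem?
    intro n
    by_cases hn : n < N
    · exact congrFun h ⟨n, hn⟩
    · rw [List.getElem?_eq_none (le_trans (hlen q) (by omega)),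
        List.getElem?_eq_none (le_trans (hlen q') (by omega))]
  letI hfin : Fintype {γ : List (I × O) // ValidFrom M p₀ γ} := Fintype.ofInjective _ hinj
  refine ⟨{γ : List (I × O) // ValidFrom M p₀ γ}, hfin, tree M p₀, ⟨[], valid_nil M p₀⟩,
    ?_, ?_, ?_⟩
  · constructor
    · -- singleInput
      intro q i₁ o₁ q₁ i₂ o₂ q₂ h₁ h₂
      have hv₁ : ValidFrom M p₀ (q.1 ++ [(i₁, o₁)]) := h₁ ▸ q₁.2
      have hv₂ : ValidFrom M p₀ (q.1 ++ [(i₂, o₂)]) := h₂ ▸ q₂.2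
      obtain ⟨-, p, hp, hi₁⟩ := (valid_append_iff M).mp hv₁
      obtain ⟨-, p', hp', hi₂⟩ := (valid_append_iff M).mp hv₂
      rw [hp] at hp'
      obtain rfl : p = p' := by injection hp'
      rw [hi₁] at hi₂
      injection hi₂
    · -- outputComplete
      intro q i o q' h o'
      have hv : ValidFrom M p₀ (q.1 ++ [(i, o)]) := h ▸ q'.2
      obtain ⟨hvq, p, hp, hi⟩ := (valid_append_iff M).mp hv
      have hv' : ValidFrom M p₀ (q.1 ++ [(i, o')]) :=
        (valid_append_iff M).mpr ⟨hvq, p, hp, hi⟩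
      exact ⟨⟨q.1 ++ [(i, o')], hv'⟩, rfl⟩
    · -- observable
      intro s i o t₁ t₂ h₁ h₂
      exact Subtype.ext (h₁.trans h₂.symm)
    · -- acyclic
      intro q γ hne hr
      have hEq := tree_runs_eq M p₀ hr
      have hl := congrArg List.length hEq
      simp only [List.length_append] at hl
      exact hne (List.length_eq_zero_iff.mp (by omega))
    · -- connected
      intro q
      refine ⟨q.1, ?_⟩
      have hval : ValidFrom M p₀ ([] ++ q.1) := by simpa using q.2
      have hrun := tree_runs_to M p₀ q.1 [] hval
      have he1 : (⟨[] ++ q.1, hval⟩ : {γ : List (I × O) // ValidFrom M p₀ γ}) = q :=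
        Subtype.ext (by simp)
      rw [he1] at hrun
      exact hrun
  · -- homing
    intro γ q hr hd
    have hγ : q.1 = γ := by simpa using tree_runs_eq M p₀ hr
    have htr : track M p₀ γ = none := by
      rw [← hγ]
      cases htr' : track M p₀ q.1 with
      | none => rfl
      | some p =>
        obtain ⟨m, hm⟩ := valid_track_W M hW q.2 htr'
        obtain ⟨i, hi⟩ := strat_isSome M hm
        obtain ⟨o, s', -⟩ := hc p.1 i
        have hv : ValidFrom M p₀ (q.1 ++ [(i, o)]) :=
          (valid_append_iff M).mpr ⟨q.2, p, htr', hi⟩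
        exact absurd (show (tree M p₀).h q i o ⟨q.1 ++ [(i, o)], hv⟩ from rfl) (hd i o _)
    by_cases h₁ : ∃ t, M.Runs s₁ γ t
    · obtain ⟨t₁, ht₁⟩ := h₁
      refine ⟨t₁, ?_⟩
      intro s' hs' t ht
      simp only [Set.mem_insert_iff, Set.mem_singleton_iff] at hs'
      rcases hs' with rfl | rfl
      · exact runs_det M ho ht ht₁
      · exact (merge_of_track_none M ho (p := p₀) htr ht₁ ht).symm
    · by_cases h₂ : ∃ t, M.Runs s₂ γ t
      · obtain ⟨t₂, ht₂⟩ := h₂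
        refine ⟨t₂, ?_⟩
        intro s' hs' t ht
        simp only [Set.mem_insert_iff, Set.mem_singleton_iff] at hs'
        rcases hs' with rfl | rfl
        · exact absurd ⟨t, ht⟩ h₁
        · exact runs_det M ho ht ht₂
      · refine ⟨s₁, ?_⟩
        intro s' hs' t ht
        simp only [Set.mem_insert_iff, Set.mem_singleton_iff] at hs'
        rcases hs' with rfl | rfl
        · exact absurd ⟨t, ht⟩ h₁
        · exact absurd ⟨t, ht⟩ h₂
  · -- length bound
    intro γ q hr
    have hγ : q.1 = γ := by simpa using tree_runs_eq M p₀ hr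
    have := hlen q
    rwa [hγ] at this

end FSM


/-- an adaptively homing pair of a complete observable FSM with `n` states
admits a homing test case whose height (length of the longest trace from the initial state
to a deadlock state) is at most `n(n-1)/2`. -/
theorem adaptively_homing_pair_height_bound
    {S I O : Type} [Fintype S] [Fintype I] [Fintype O]
    (M : FSM S I O) (hc : M.Complete) (ho : M.Observable) (s₁ s₂ : S)
    (hp : M.AdaptivelyHomingPair s₁ s₂) :
    ∃ (Q : Type) (_ : Fintype Q) (P : FSM Q I O) (q0 : Q),
      P.IsTestCase q0 ∧ FSM.IsHomingFor M {s₁, s₂} P q0 ∧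
      ∀ (γ : List (I × O)) (q : Q), P.Runs q0 γ q →
        γ.length ≤ Fintype.card S * (Fintype.card S - 1) / 2 := by
  classical
  by_cases hss : s₁ = s₂
  · subst hss
    refine ⟨PUnit, inferInstance, ⟨fun _ _ _ _ => False⟩, PUnit.unit, ?_, ?_, ?_⟩
    · constructor
      · intro q i₁ o₁ q₁ i₂ o₂ q₂ h₁ _
        exact h₁.elim
      · intro q i o q' h
        exact h.elim
      · intro s i o t₁ t₂ h
        exact h.elim
      · intro q γ hne hr
        cases hr with
        | nil => exact hne rfl
        | cons h _ => exact h
      · intro q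
        exact ⟨[], FSM.Runs.nil q⟩
    · intro γ q hr hd
      cases hr with
      | nil =>
        refine ⟨s₁, ?_⟩
        intro s' hs' t ht
        cases ht
        simp only [Set.mem_insert_iff, Set.mem_singleton_iff] at hs'
        rcases hs' with rfl | rfl <;> rfl
      | cons h _ => exact h.elim
    · intro γ q hr
      cases hr with
      | nil => simp
      | cons h _ => exact h.elim
  · obtain ⟨Q₀, hF, P₀, q₀, tc, hom⟩ := hp
    haveI := hF
    have hW1 : (s₁, s₂) ∈ FSM.Wset M (Fintype.card Q₀ + 1) := by
      refine FSM.homs_mem_W M P₀ tc.outputComplete (Fintype.card Q₀) q₀ s₁ s₂ ?_ ?_ hss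
      · intro γ r hr
        have hlt := FSM.runs_len_lt P₀ tc.acyclic γ Finset.univ q₀ r hr
          (fun _ m _ _ => Finset.mem_univ m)
        rw [Finset.card_univ] at hlt
        omega
      · intro γ r hr hd t₁ t₂ h₁ h₂
        obtain ⟨s, hs⟩ := hom γ r hr hd
        rw [hs s₁ (by simp) t₁ h₁, hs s₂ (by simp) t₂ h₂]
    have hW : (s₁, s₂) ∈ FSM.Wset M (Fintype.card S * (Fintype.card S - 1) / 2) :=
      FSM.Wset_subset_final M _ hW1
    obtain ⟨Q, hQ, P, q0, h1, h2, h3⟩ := FSM.construction M hc ho s₁ s₂ hW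
    exact ⟨Q, hQ, P, q0, h1, h2, h3⟩
end
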